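/- Let D_min = {x ∈ V : (x,α) ≥ −1 for all α ∈ Π and (x,θ) ≤ 2}. Then: (1) an element w = v·t_r ∈ Ŵ is minimal if and only if w is dominant and v(r) ∈ D_min ∩ Q∨; (2) the map Ŵ_min → D_min ∩ Q∨ sending w = v·t_r to v(r) is a bijection. -/

import Mathlib

open scoped RealInnerProductSpace
open Module

noncomputable section

variable {V : Type*} [NormedAddCommGroup V] [InnerProductSpace ℝ V]

/-- The underlying function of the orthogonal reflection in the hyperplane
orthogonal to `α` (the identity if `α = 0`). -/
def reflFun (α : V) (x : V) : V := x - (2 * ⟪α, x⟫ / ⟪α, α⟫) • α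

lemma reflFun_involutive (α : V) : Function.Involutive (reflFun α) := by
  intro x
  by_cases h : α = 0
  · simp [reflFun, h]
  · have hs : ⟪α, α⟫ ≠ 0 := inner_self_ne_zero.mpr h
    have h1 : ⟪α, x - (2 * ⟪α, x⟫ / ⟪α, α⟫) • α⟫ = -⟪α, x⟫ := by
      rw [inner_sub_right, real_inner_smul_right]
      field_simp
      ring
    simp only [reflFun]
    rw [h1, show 2 * -⟪α, x⟫ / ⟪α, α⟫ = -(2 * ⟪α, x⟫ / ⟪α, α⟫) by ring,
      neg_smul, sub_neg_eq_add]
    abel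

/-- The orthogonal reflection in the hyperplane orthogonal to `α`, as a linear
equivalence (the identity if `α = 0`). -/
def sRefl (α : V) : V ≃ₗ[ℝ] V where
  toFun := reflFun α
  map_add' x y := by
    simp only [reflFun, inner_add_right]
    rw [show 2 * (⟪α, x⟫ + ⟪α, y⟫) / ⟪α, α⟫
        = 2 * ⟪α, x⟫ / ⟪α, α⟫ + 2 * ⟪α, y⟫ / ⟪α, α⟫ by ring, add_smul]
    abel
  map_smul' c x := by
    simp only [reflFun, real_inner_smul_right, RingHom.id_apply, smul_sub, smul_smul]
    congr 2
    ring
  invFun := reflFun α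
  left_inv := reflFun_involutive α
  right_inv := reflFun_involutive α

/-- The coroot `α∨ = 2α/(α,α)` of a vector `α`. -/
def corootVec (α : V) : V := (2 / ⟪α, α⟫) • α

/-- The (affine) hyperplane `{x | (x, μ) = k}`. -/
def rootHyperplane (μ : V) (k : ℝ) : Set V := {x : V | ⟪x, μ⟫ = k}

/-- `R` is a region of the hyperplane arrangement whose hyperplanes are encoded by the
pairs `(μ, k) ∈ A` (the hyperplane `{x | (x,μ) = k}`): a connected component of the
complement of the union of the hyperplanes. -/
def IsRegionOf (A : Set (V × ℝ)) (R : Set V) : Prop :=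
  ∃ x ∈ (⋃ h ∈ A, rootHyperplane h.1 h.2)ᶜ,
    R = connectedComponentIn (⋃ h ∈ A, rootHyperplane h.1 h.2)ᶜ x

open Classical in
/-- The characteristic polynomial of the hyperplane arrangement encoded by
`A : Set (V × ℝ)` in an ambient space of dimension `p`, evaluated at `t`, via
Whitney's theorem: `χ(A,t) = ∑ (-1)^{#S} t^{dim ∩ S}`, the sum being over all central
subarrangements `S ⊆ A` (junk value `0` if `A` is infinite). -/
noncomputable def charPolyEval (p : ℕ) (A : Set (V × ℝ)) (t : ℝ) : ℝ :=
  if hA : A.Finite then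
    ∑ S ∈ hA.toFinset.powerset,
      if (⋂ h ∈ (S : Set (V × ℝ)), rootHyperplane h.1 h.2).Nonempty then
        (-1 : ℝ) ^ S.card *
          t ^ (p - Module.finrank ℝ (Submodule.span ℝ (Prod.fst '' (S : Set (V × ℝ)))))
      else 0
  else 0

/-- The linear action of `w = v·t_r ∈ Ŵ` on `V ⊕ ℝδ`:
`w(μ + kδ) = v(μ) + (k - (μ,r))δ`. -/
def affAct (v : V ≃ₗ[ℝ] V) (r : V) (β : V × ℝ) : V × ℝ :=
  (v β.1, β.2 - ⟪β.1, r⟫)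

/-- The linear action of `w⁻¹` on `V ⊕ ℝδ`, for `w = v·t_r ∈ Ŵ`:
`w⁻¹(μ + kδ) = v⁻¹(μ) + (k + (v⁻¹μ, r))δ`. -/
def affActInv (v : V ≃ₗ[ℝ] V) (r : V) (β : V × ℝ) : V × ℝ :=
  (v.symm β.1, β.2 + ⟪v.symm β.1, r⟫)

/-- The affine `∗`-action of `w = v·t_r ∈ Ŵ` on `V`: `w ∗ x = v(x + r)`. -/
def affStar (v : V ≃ₗ[ℝ] V) (r : V) (x : V) : V := v (x + r)

/-- The affine `∗`-action of `w⁻¹` on `V`, for `w = v·t_r ∈ Ŵ`: `w⁻¹ ∗ x = v⁻¹(x) - r`. -/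
def affStarInv (v : V ≃ₗ[ℝ] V) (r : V) (x : V) : V := v.symm x - r

/-- An irreducible reduced crystallographic root system `Δ` of rank `p`, spanning a real
inner product space `V`, together with a choice of positive system `Δ⁺ = pos`, simple
roots `α₁, …, α_p`, and the highest root `θ`. -/
structure RootSystemData (V : Type*) [NormedAddCommGroup V] [InnerProductSpace ℝ V]
    (p : ℕ) where
  /-- the set of roots -/
  Δ : Set V
  finite : Δ.Finite
  zero_notMem : (0 : V) ∉ Δ
  span_eq_top : Submodule.span ℝ Δ = ⊤
  finrank_eq : Module.finrank ℝ V = p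
  neg_mem : ∀ α ∈ Δ, -α ∈ Δ
  /-- reduced: the only multiples of a root that are roots are `±α` -/
  reduced : ∀ α ∈ Δ, ∀ c : ℝ, c • α ∈ Δ → c = 1 ∨ c = -1
  /-- crystallographic: Cartan integers -/
  crystallographic : ∀ α ∈ Δ, ∀ β ∈ Δ, ∃ n : ℤ, 2 * ⟪α, β⟫ / ⟪α, α⟫ = (n : ℝ)
  reflect_mem : ∀ α ∈ Δ, ∀ β ∈ Δ, sRefl α β ∈ Δ
  /-- irreducible: no splitting into two orthogonal parts -/
  irred : ∀ S T : Set V, Δ = S ∪ T → (∀ a ∈ S, ∀ b ∈ T, ⟪a, b⟫ = 0) → S = ∅ ∨ T = ∅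
  /-- the simple roots `α₁, …, α_p` -/
  simpleRoot : Fin p → V
  simpleRoot_mem : ∀ i, simpleRoot i ∈ Δ
  simpleRoot_indep : LinearIndependent ℝ simpleRoot
  /-- the positive roots `Δ⁺` -/
  pos : Set V
  pos_def : pos = {α ∈ Δ | ∃ c : Fin p → ℕ, α = ∑ i, (c i : ℝ) • simpleRoot i}
  pos_or_neg : ∀ α ∈ Δ, α ∈ pos ∨ -α ∈ pos
  /-- the highest root -/
  θ : V
  θ_mem : θ ∈ pos
  θ_highest : ∀ α ∈ pos, ∃ c : Fin p → ℕ, θ = α + ∑ i, (c i : ℝ) • simpleRoot i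

namespace RootSystemData

variable {p : ℕ} (RS : RootSystemData V p)

/-- The coroot lattice `Q∨`, generated by the coroots of the roots. -/
def corootLattice : AddSubgroup V := AddSubgroup.closure (corootVec '' RS.Δ)

/-- The coweight lattice `P∨ = {x | (x, α) ∈ ℤ for all roots α}`. -/
def coweightLattice : AddSubgroup V where
  carrier := {x : V | ∀ α ∈ RS.Δ, ∃ n : ℤ, ⟪x, α⟫ = (n : ℝ)}
  zero_mem' := fun α _ => ⟨0, by simp⟩
  add_mem' := by
    intro x y hx hy α hα
    obtain ⟨n, hn⟩ := hx α hα
    obtain ⟨m, hm⟩ := hy α hα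
    exact ⟨n + m, by rw [inner_add_left, hn, hm]; push_cast; ring⟩
  neg_mem' := by
    intro x hx α hα
    obtain ⟨n, hn⟩ := hx α hα
    exact ⟨-n, by rw [inner_neg_left, hn]; push_cast; ring⟩

/-- The index of connection `f = [P∨ : Q∨]`. -/
noncomputable def indexOfConnection : ℕ :=
  RS.corootLattice.relIndex RS.coweightLattice

/-- The Weyl group `W`, generated by the reflections in the roots. -/
def weylGroup : Subgroup (V ≃ₗ[ℝ] V) :=
  Subgroup.closure {w : V ≃ₗ[ℝ] V | ∃ α ∈ RS.Δ, w = sRefl α}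

/-- The partial order `μ ≼ γ` on roots: `γ - μ` is a nonnegative integer combination of
the simple roots. -/
def rootLe (μ γ : V) : Prop :=
  ∃ c : Fin p → ℕ, γ = μ + ∑ i, (c i : ℝ) • RS.simpleRoot i

/-- An ideal of `Δ⁺`. -/
def IsIdeal (I : Set V) : Prop :=
  I ⊆ RS.pos ∧ ∀ γ ∈ I, ∀ μ ∈ RS.pos, γ + μ ∈ RS.Δ → γ + μ ∈ I

/-- An antichain in the poset `(Δ⁺, ≼)`. -/
def IsRootAntichain (Γ : Set V) : Prop :=
  Γ ⊆ RS.pos ∧ ∀ μ ∈ Γ, ∀ γ ∈ Γ, RS.rootLe μ γ → μ = γ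

/-- The set of minimal elements (generators, for an ideal) of a subset of `Δ⁺`. -/
def gens (I : Set V) : Set V := {γ ∈ I | ∀ μ ∈ I, RS.rootLe μ γ → μ = γ}

/-- The ideal `I⟨Γ⟩` generated by an antichain `Γ`. -/
def idealGen (Γ : Set V) : Set V := {μ ∈ RS.pos | ∃ γ ∈ Γ, RS.rootLe γ μ}

/-- The set `Ξ(I)` of maximal elements of `Δ⁺ \ I`. -/
def XiSet (I : Set V) : Set V :=
  {γ ∈ RS.pos \ I | ∀ μ ∈ RS.pos \ I, RS.rootLe γ μ → γ = μ}

/-- `k(μ, I)`: the minimal number of summands in an expression of `μ` as a sum of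
positive roots not in `I`. -/
noncomputable def kNum (I : Set V) (μ : V) : ℕ :=
  sInf {n : ℕ | ∃ f : Fin n → V, (∀ i, f i ∈ RS.pos \ I) ∧ μ = ∑ i, f i}

/-- A root is short if it is strictly shorter than the highest root `θ`. -/
def IsShort (α : V) : Prop := α ∈ RS.Δ ∧ ⟪α, α⟫ < ⟪RS.θ, RS.θ⟫

/-- The short positive roots `Δ⁺_s`. -/
def shortPos : Set V := {α ∈ RS.pos | ⟪α, α⟫ < ⟪RS.θ, RS.θ⟫}

/-- The long positive roots `Δ⁺_l`. -/
def longPos : Set V := {α ∈ RS.pos | ⟪α, α⟫ = ⟪RS.θ, RS.θ⟫}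

/-- `Δ` has roots of exactly two lengths, the squared length ratio (long over short)
being `ratio`. -/
def LengthRatio (ratio : ℝ) : Prop :=
  ∃ ls : ℝ, 0 < ls ∧ ls < ⟪RS.θ, RS.θ⟫ ∧
    (∀ α ∈ RS.Δ, ⟪α, α⟫ = ls ∨ ⟪α, α⟫ = ⟪RS.θ, RS.θ⟫) ∧
    (∃ α ∈ RS.Δ, ⟪α, α⟫ = ls) ∧ ⟪RS.θ, RS.θ⟫ = ratio * ls

/-- `Δ` has roots of two different lengths. -/
def TwoLengths : Prop := ∃ ratio : ℝ, RS.LengthRatio ratio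

/-- The simple roots `Π(Δ⁺_s)` of the root system `Δ_s` of short roots with respect to
the positive system `Δ⁺_s`: the short positive roots that are not sums of two short
positive roots. -/
def shortSimple : Set V :=
  {α ∈ RS.shortPos | ¬ ∃ β ∈ RS.shortPos, ∃ γ ∈ RS.shortPos, α = β + γ}

/-- The positive affine roots `Δ̂⁺`, an affine root `μ + kδ` being encoded as the pair
`(μ, k)`. -/
def affPos : Set (V × ℝ) :=
  {β : V × ℝ | β.1 ∈ RS.Δ ∧ (0 < β.2 ∨ (β.2 = 0 ∧ β.1 ∈ RS.pos))}

/-- A pair `(v, r)` with `v ∈ W`, `r ∈ Q∨` represents the element `w = v·t_r` of the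
affine Weyl group `Ŵ = W ⋉ Q∨`; it is dominant if `w(α) ∈ Δ̂⁺` for all `α ∈ Π`. -/
def IsDominantPair (v : V ≃ₗ[ℝ] V) (r : V) : Prop :=
  v ∈ RS.weylGroup ∧ r ∈ RS.corootLattice ∧
    ∀ i, affAct v r (RS.simpleRoot i, 0) ∈ RS.affPos

/-- `N(w) = {β ∈ Δ̂⁺ | w(β) ∈ -Δ̂⁺}` for `w = v·t_r`. -/
def Nset (v : V ≃ₗ[ℝ] V) (r : V) : Set (V × ℝ) :=
  {β : V × ℝ | β ∈ RS.affPos ∧ -(affAct v r β) ∈ RS.affPos}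

/-- The first layer ideal `I_w = {μ ∈ Δ⁺ | δ - μ ∈ N(w)}` of `w = v·t_r`. -/
def firstLayerIdeal (v : V ≃ₗ[ℝ] V) (r : V) : Set V :=
  {μ ∈ RS.pos | ((-μ, (1 : ℝ)) : V × ℝ) ∈ RS.Nset v r}

/-- `w = v·t_r` is minimal: dominant, and for every affine simple root `α ∈ Π̂`,
writing `w⁻¹(α) = kδ + μ`, one has `k ≥ -1`. -/
def IsMinimalPair (v : V ≃ₗ[ℝ] V) (r : V) : Prop :=
  RS.IsDominantPair v r ∧
    (∀ i, -1 ≤ (affActInv v r (RS.simpleRoot i, 0)).2) ∧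
    -1 ≤ (affActInv v r (-RS.θ, 1)).2

/-- `w = v·t_r` is maximal: dominant, and for every affine simple root `α ∈ Π̂`,
writing `w⁻¹(α) = kδ + μ`, one has `k ≤ 1`. -/
def IsMaximalPair (v : V ≃ₗ[ℝ] V) (r : V) : Prop :=
  RS.IsDominantPair v r ∧
    (∀ i, (affActInv v r (RS.simpleRoot i, 0)).2 ≤ 1) ∧
    (affActInv v r (-RS.θ, 1)).2 ≤ 1

/-- `w = v·t_r` is `s`-minimal: dominant, `k ≥ -1` for short simple `α`, and `k ≥ 0`
for `α ∈ Π̂_l = Π_l ∪ {α₀}`, where `w⁻¹(α) = kδ + μ`. -/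
def IsSMinimalPair (v : V ≃ₗ[ℝ] V) (r : V) : Prop :=
  RS.IsDominantPair v r ∧
    (∀ i, RS.IsShort (RS.simpleRoot i) →
      -1 ≤ (affActInv v r (RS.simpleRoot i, 0)).2) ∧
    (∀ i, ¬ RS.IsShort (RS.simpleRoot i) →
      0 ≤ (affActInv v r (RS.simpleRoot i, 0)).2) ∧
    0 ≤ (affActInv v r (-RS.θ, 1)).2

/-- `w = v·t_r` is `s`-maximal: dominant, `k ≤ 1` for short simple `α`, and `k ≤ 0`
for `α ∈ Π̂_l = Π_l ∪ {α₀}`, where `w⁻¹(α) = kδ + μ`. -/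
def IsSMaximalPair (v : V ≃ₗ[ℝ] V) (r : V) : Prop :=
  RS.IsDominantPair v r ∧
    (∀ i, RS.IsShort (RS.simpleRoot i) →
      (affActInv v r (RS.simpleRoot i, 0)).2 ≤ 1) ∧
    (∀ i, ¬ RS.IsShort (RS.simpleRoot i) →
      (affActInv v r (RS.simpleRoot i, 0)).2 ≤ 0) ∧
    (affActInv v r (-RS.θ, 1)).2 ≤ 0

/-- The open fundamental Weyl chamber `C`. -/
def chamber : Set V := {x : V | ∀ i, 0 < ⟪x, RS.simpleRoot i⟫}

/-- The open fundamental alcove `A`. -/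
def alcove : Set V := {x : V | (∀ i, 0 < ⟪x, RS.simpleRoot i⟫) ∧ ⟪x, RS.θ⟫ < 1}

/-- The affine arrangement of all hyperplanes `{x | (x,μ) = k}`, `μ ∈ Δ⁺`, `k ∈ ℤ`,
whose regions are the alcoves. -/
def affineArrangement : Set (V × ℝ) :=
  {h : V × ℝ | h.1 ∈ RS.pos ∧ ∃ k : ℤ, h.2 = (k : ℝ)}

/-- The dominant region `R_I` of the Catalan (equivalently, Shi) arrangement attached
to an ideal `I ⊆ Δ⁺` under the Shi bijection. -/
def regionOfIdeal (I : Set V) : Set V :=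
  {x ∈ RS.chamber | (∀ γ ∈ I, 1 < ⟪x, γ⟫) ∧ ∀ γ ∈ RS.pos \ I, ⟪x, γ⟫ < 1}

/-- The semi-Catalan arrangement `Cat_s(Δ)`. -/
def semiCatalan : Set (V × ℝ) :=
  {h : V × ℝ | h.1 ∈ RS.shortPos ∧ (h.2 = -1 ∨ h.2 = 0 ∨ h.2 = 1)} ∪
    {h : V × ℝ | h.1 ∈ RS.longPos ∧ h.2 = 0}

/-- The `m`-semi-Catalan arrangement `Cat_s^m(Δ)`. -/
def semiCatalanM (m : ℕ) : Set (V × ℝ) :=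
  {h : V × ℝ | h.1 ∈ RS.shortPos ∧ ∃ k : ℤ, |k| ≤ (m : ℤ) ∧ h.2 = (k : ℝ)} ∪
    {h : V × ℝ | h.1 ∈ RS.longPos ∧ h.2 = 0}

/-- The region `R_Γ^(s)` of the semi-Catalan arrangement attached to a short
antichain `Γ`. -/
def sRegion (Γ : Set V) : Set V :=
  {x ∈ RS.chamber | (∀ μ ∈ RS.idealGen Γ ∩ RS.shortPos, 1 < ⟪x, μ⟫) ∧
    ∀ μ ∈ RS.shortPos \ RS.idealGen Γ, ⟪x, μ⟫ < 1}

/-- `α` has height `n` (sum of the coefficients over the simple roots). -/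
def heightIs (α : V) (n : ℕ) : Prop :=
  ∃ c : Fin p → ℕ, α = ∑ i, (c i : ℝ) • RS.simpleRoot i ∧ ∑ i, c i = n

/-- `e` enumerates the exponents `e₁, …, e_p` of the Weyl group `W`, characterized by the
Shapiro–Kostant–Steinberg property: for every `k ≥ 1`, the number of positive roots of
height `k` equals the number of exponents that are `≥ k`. -/
def IsExponents (e : Fin p → ℕ) : Prop :=
  ∀ k : ℕ, 1 ≤ k →
    {α ∈ RS.pos | RS.heightIs α k}.ncard = {i : Fin p | k ≤ e i}.ncard

/-- `h` is the Coxeter number of `W`, characterized by `#Δ = p·h`. -/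
def IsCoxeterNumber (h : ℕ) : Prop := RS.Δ.ncard = p * h

open Classical in
/-- `g` is the sum of the coefficients of the short simple roots in the expression
`θ = Σ cᵢ αᵢ` of the highest root. -/
def IsShortCoeffSum (g : ℕ) : Prop :=
  ∃ c : Fin p → ℕ, RS.θ = ∑ i, (c i : ℝ) • RS.simpleRoot i ∧
    (∑ i, if RS.IsShort (RS.simpleRoot i) then c i else 0) = g

open Classical in
/-- The number of constraints of the simplex
`D_max = {x | (x,αᵢ) ≤ 1 ∀i, (x,θ) ≥ 0}` that are active (hold with equality) at `x`;
for `x ∈ D_max` this is the codimension of the face of `D_max` containing `x`. -/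
noncomputable def dmaxFaceCodim (x : V) : ℕ :=
  {i : Fin p | ⟪x, RS.simpleRoot i⟫ = 1}.ncard + (if ⟪x, RS.θ⟫ = 0 then 1 else 0)

end RootSystemData

-- ### Auxiliary development for statement1
section Stmt1Aux
variable {V : Type*} [NormedAddCommGroup V] [InnerProductSpace ℝ V]

lemma sRefl_apply' (α x : V) : sRefl α x = x - (2 * ⟪α, x⟫ / ⟪α, α⟫) • α := rfl

lemma sRefl_neg' (α : V) : sRefl (-α) = sRefl α := by
  ext x
  simp only [sRefl_apply', inner_neg_left, inner_neg_right, smul_neg, neg_neg]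
  rw [show 2 * -⟪α, x⟫ / ⟪α, α⟫ = -(2 * ⟪α, x⟫ / ⟪α, α⟫) by ring]
  simp

lemma sRefl_inv' (α : V) : (sRefl α)⁻¹ = sRefl α := rfl

lemma sRefl_mul_self' (α : V) : sRefl α * sRefl α = 1 := by
  ext x
  exact reflFun_involutive α x

lemma sRefl_self' {α : V} (h : α ≠ 0) : sRefl α α = -α := by
  have hs : ⟪α, α⟫ ≠ 0 := inner_self_ne_zero.mpr h
  rw [sRefl_apply', show (2 : ℝ) * ⟪α, α⟫ / ⟪α, α⟫ = 2 by field_simp, two_smul]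
  abel

/-- `v` preserves the inner product. -/
def IsOrth (v : V ≃ₗ[ℝ] V) : Prop := ∀ x y : V, ⟪v x, v y⟫ = ⟪x, y⟫

lemma sRefl_isOrth (α : V) : IsOrth (sRefl α) := by
  intro x y
  by_cases h : α = 0
  · simp [sRefl_apply', h]
  · have hs : ⟪α, α⟫ ≠ 0 := inner_self_ne_zero.mpr h
    simp only [sRefl_apply', inner_sub_left, inner_sub_right, real_inner_smul_left,
      real_inner_smul_right]
    rw [real_inner_comm α x]
    field_simp
    ring

lemma IsOrth.inv {v : V ≃ₗ[ℝ] V} (hv : IsOrth v) : IsOrth v.symm := by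
  intro x y
  rw [← hv (v.symm x) (v.symm y), v.apply_symm_apply, v.apply_symm_apply]

lemma IsOrth.comp {v w : V ≃ₗ[ℝ] V} (hv : IsOrth v) (hw : IsOrth w) : IsOrth (v * w) :=
  fun x y => by rw [show (v * w) x = v (w x) from rfl, show (v * w) y = v (w y) from rfl,
    hv, hw]

lemma sRefl_conj {c : V ≃ₗ[ℝ] V} (hc : IsOrth c) (α : V) :
    c * sRefl α * c⁻¹ = sRefl (c α) := by
  ext x
  show c (sRefl α (c.symm x)) = sRefl (c α) x
  have h1 : ⟪c α, x⟫ = ⟪α, c.symm x⟫ := by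
    conv_lhs => rw [← c.apply_symm_apply x]
    exact hc α (c.symm x)
  have h2 : ⟪c α, c α⟫ = ⟪α, α⟫ := hc α α
  rw [sRefl_apply', sRefl_apply', h1, h2, map_sub, map_smul, c.apply_symm_apply]

variable {p : ℕ} {RS : RootSystemData V p}

lemma root_ne_zero {α : V} (h : α ∈ RS.Δ) : α ≠ 0 := fun e => RS.zero_notMem (e ▸ h)

lemma root_inner_pos {α : V} (h : α ∈ RS.Δ) : (0:ℝ) < ⟪α, α⟫ :=
  lt_of_le_of_ne real_inner_self_nonneg (Ne.symm (inner_self_ne_zero.mpr (root_ne_zero h)))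

lemma pos_subset : RS.pos ⊆ RS.Δ := by
  rw [RS.pos_def]; exact fun a ha => ha.1

lemma mem_pos {β : V} (h : β ∈ RS.pos) :
    β ∈ RS.Δ ∧ ∃ c : Fin p → ℕ, β = ∑ i, (c i : ℝ) • RS.simpleRoot i := by
  rwa [RS.pos_def] at h

lemma mem_pos_of {β : V} (hβ : β ∈ RS.Δ) (c : Fin p → ℕ)
    (hc : β = ∑ i, (c i : ℝ) • RS.simpleRoot i) : β ∈ RS.pos := by
  rw [RS.pos_def]; exact ⟨hβ, c, hc⟩

lemma coeff_unique {f g : Fin p → ℝ}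
    (h : ∑ i, f i • RS.simpleRoot i = ∑ i, g i • RS.simpleRoot i) : f = g := by
  have h0 : ∑ i, (f i - g i) • RS.simpleRoot i = 0 := by
    simp only [sub_smul]
    rw [Finset.sum_sub_distrib, h, sub_self]
  have := Fintype.linearIndependent_iff.mp RS.simpleRoot_indep (fun i => f i - g i) h0
  funext i
  have h2 := this i
  linarith

lemma simple_mem_pos (i : Fin p) : RS.simpleRoot i ∈ RS.pos := by
  refine mem_pos_of (RS.simpleRoot_mem i) (fun j => if j = i then 1 else 0) ?_
  simp [apply_ite (fun n : ℕ => (n : ℝ)), ite_smul]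

lemma pos_disjoint {β : V} (h1 : β ∈ RS.pos) (h2 : -β ∈ RS.pos) : False := by
  obtain ⟨hβ, c, hc⟩ := mem_pos h1
  obtain ⟨_, d, hd⟩ := mem_pos h2
  have : ∑ i, ((c i : ℝ) + (d i : ℝ)) • RS.simpleRoot i
      = ∑ i, (0 : ℝ) • RS.simpleRoot i := by
    simp only [add_smul, Finset.sum_add_distrib]
    rw [← hc, ← hd]
    simp
  have hcd := congrFun (coeff_unique this)
  have hc0 : ∀ i, (c i : ℝ) = 0 := by
    intro i
    have := hcd i
    have h1 : (0:ℝ) ≤ (c i : ℝ) := Nat.cast_nonneg _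
    have h2 : (0:ℝ) ≤ (d i : ℝ) := Nat.cast_nonneg _
    linarith
  have : β = 0 := by
    rw [hc]
    exact Finset.sum_eq_zero fun i _ => by rw [hc0 i, zero_smul]
  exact root_ne_zero hβ this

lemma refl_simple_pos {β : V} (i : Fin p) (hβ : β ∈ RS.pos) (hne : β ≠ RS.simpleRoot i) :
    sRefl (RS.simpleRoot i) β ∈ RS.pos := by
  set αi := RS.simpleRoot i with hαi
  have hiΔ : αi ∈ RS.Δ := RS.simpleRoot_mem i
  obtain ⟨hβΔ, c, hc⟩ := mem_pos hβ
  have hγΔ : sRefl αi β ∈ RS.Δ := RS.reflect_mem _ hiΔ _ hβΔ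
  -- there is j ≠ i with c j ≠ 0
  have hj : ∃ j, j ≠ i ∧ c j ≠ 0 := by
    by_contra hcon
    push_neg at hcon
    have hβi : β = (c i : ℝ) • αi := by
      rw [hc, Finset.sum_eq_single i]
      · intro j _ hji
        rw [hcon j hji]
        simp
      · intro h; exact absurd (Finset.mem_univ i) h
    have := RS.reduced αi hiΔ (c i : ℝ) (by rw [← hβi]; exact hβΔ)
    rcases this with h1 | h1
    · exact hne (by rw [hβi, h1, one_smul])
    · have : (0:ℝ) ≤ (c i : ℝ) := Nat.cast_nonneg _
      rw [h1] at this; linarith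
  obtain ⟨j, hji, hcj⟩ := hj
  by_contra hγpos
  have hγneg : -(sRefl αi β) ∈ RS.pos := (RS.pos_or_neg _ hγΔ).resolve_left hγpos
  obtain ⟨_, d, hd⟩ := mem_pos hγneg
  set m : ℝ := 2 * ⟪αi, β⟫ / ⟪αi, αi⟫ with hm
  have hrefl : sRefl αi β = ∑ k, ((c k : ℝ) - if k = i then m else 0) • RS.simpleRoot k := by
    have hsum : ∑ k, ((c k : ℝ) - if k = i then m else 0) • RS.simpleRoot k
        = (∑ k, (c k : ℝ) • RS.simpleRoot k) - m • RS.simpleRoot i := by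
      simp only [sub_smul, Finset.sum_sub_distrib, ite_smul, zero_smul]
      rw [Finset.sum_ite_eq' Finset.univ i (fun x => m • RS.simpleRoot x)]
      simp
    rw [hsum, ← hc, sRefl_apply', ← hαi, ← hm]
  have heq : (fun k => (d k : ℝ)) = fun k => -((c k : ℝ) - if k = i then m else 0) := by
    refine coeff_unique (RS := RS) ?_
    rw [← hd, hrefl, ← Finset.sum_neg_distrib]
    exact Finset.sum_congr rfl fun k _ => by rw [← neg_smul, neg_sub]
  have hdj := congrFun heq j
  simp only [if_neg hji, sub_zero] at hdj
  have h1 : (0:ℝ) ≤ (d j : ℝ) := Nat.cast_nonneg _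
  have h2 : (0:ℝ) < (c j : ℝ) := by exact_mod_cast Nat.pos_of_ne_zero hcj
  rw [hdj] at h1
  linarith

/-- combined invariance predicate for the Weyl group -/
def GoodW (RS : RootSystemData V p) (v : V ≃ₗ[ℝ] V) : Prop :=
  IsOrth v ∧ ∀ α ∈ RS.Δ, v α ∈ RS.Δ

lemma goodW_of_mem {v : V ≃ₗ[ℝ] V} (hv : v ∈ RS.weylGroup) : GoodW RS v := by
  induction hv using Subgroup.closure_induction with
  | mem w hw =>
    obtain ⟨α, hα, rfl⟩ := hw
    exact ⟨sRefl_isOrth α, fun β hβ => RS.reflect_mem α hα β hβ⟩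
  | one => exact ⟨fun x y => rfl, fun α hα => hα⟩
  | mul x y _ _ hx hy =>
    exact ⟨hx.1.comp hy.1, fun α hα => hx.2 _ (hy.2 α hα)⟩
  | inv x _ hx =>
    refine ⟨hx.1.inv, ?_⟩
    have himg : x '' RS.Δ = RS.Δ := by
      apply Set.eq_of_subset_of_ncard_le
      · rintro _ ⟨α, hα, rfl⟩; exact hx.2 α hα
      · rw [Set.ncard_image_of_injective _ x.injective]
      · exact RS.finite
    intro α hα
    rw [← himg] at hα
    obtain ⟨β, hβ, rfl⟩ := hα
    rwa [show x⁻¹ (x β) = β from x.symm_apply_apply β]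

lemma weyl_orth {v : V ≃ₗ[ℝ] V} (hv : v ∈ RS.weylGroup) : IsOrth v := (goodW_of_mem hv).1

lemma weyl_root {v : V ≃ₗ[ℝ] V} (hv : v ∈ RS.weylGroup) {α : V} (hα : α ∈ RS.Δ) :
    v α ∈ RS.Δ := (goodW_of_mem hv).2 α hα

/-- product of simple reflections along a word -/
def prodW (RS : RootSystemData V p) (l : List (Fin p)) : V ≃ₗ[ℝ] V :=
  (l.map (fun i => sRefl (RS.simpleRoot i))).prod

lemma prodW_nil : prodW RS [] = 1 := rfl

lemma prodW_cons (i : Fin p) (l : List (Fin p)) :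
    prodW RS (i :: l) = sRefl (RS.simpleRoot i) * prodW RS l := by
  simp [prodW]

lemma prodW_append (a b : List (Fin p)) :
    prodW RS (a ++ b) = prodW RS a * prodW RS b := by
  simp [prodW]

lemma sRefl_simple_mem (i : Fin p) : sRefl (RS.simpleRoot i) ∈ RS.weylGroup :=
  Subgroup.subset_closure ⟨RS.simpleRoot i, RS.simpleRoot_mem i, rfl⟩

lemma prodW_mem (l : List (Fin p)) : prodW RS l ∈ RS.weylGroup := by
  induction l with
  | nil => exact Subgroup.one_mem _
  | cons i l ih =>
    rw [prodW_cons]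
    exact Subgroup.mul_mem _ (sRefl_simple_mem i) ih

lemma prodW_orth (l : List (Fin p)) : IsOrth (prodW RS l) := weyl_orth (prodW_mem l)

lemma pos_exists_inner_pos {β : V} (hβ : β ∈ RS.pos) :
    ∃ i, 0 < ⟪RS.simpleRoot i, β⟫ := by
  obtain ⟨hβΔ, c, hc⟩ := mem_pos hβ
  by_contra hcon
  push_neg at hcon
  have h1 : ⟪β, β⟫ ≤ 0 := by
    nth_rewrite 2 [hc]
    rw [inner_sum]
    refine Finset.sum_nonpos fun i _ => ?_
    rw [real_inner_smul_right, real_inner_comm]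
    exact mul_nonpos_of_nonneg_of_nonpos (Nat.cast_nonneg _) (hcon i)
  exact absurd h1 (not_le.mpr (root_inner_pos hβΔ))

/-- every reflection in a positive root is a product of simple reflections -/
lemma sRefl_pos_word : ∀ (k : ℕ) (β : V) (c : Fin p → ℕ), β ∈ RS.Δ →
    β = ∑ i, (c i : ℝ) • RS.simpleRoot i → (∑ i, c i) = k →
    ∃ l : List (Fin p), sRefl β = prodW RS l := by
  intro k
  induction k using Nat.strong_induction_on with
  | _ k ih =>
    intro β c hβΔ hc hk
    have hβpos : β ∈ RS.pos := mem_pos_of hβΔ c hc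
    obtain ⟨i, hi⟩ := pos_exists_inner_pos hβpos
    by_cases hne : β = RS.simpleRoot i
    · exact ⟨[i], by rw [hne]; simp [prodW]⟩
    · set αi := RS.simpleRoot i with hαi
      have hγpos : sRefl αi β ∈ RS.pos := refl_simple_pos i hβpos hne
      obtain ⟨hγΔ, d, hd⟩ := mem_pos hγpos
      set m : ℝ := 2 * ⟪αi, β⟫ / ⟪αi, αi⟫ with hm
      have hmpos : 0 < m := by
        apply div_pos (by linarith) (root_inner_pos (RS.simpleRoot_mem i))
      -- coefficients of sRefl αi β
      have hrefl : sRefl αi β = ∑ j, ((c j : ℝ) - if j = i then m else 0) • RS.simpleRoot j := by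
        have hsum : ∑ j, ((c j : ℝ) - if j = i then m else 0) • RS.simpleRoot j
            = (∑ j, (c j : ℝ) • RS.simpleRoot j) - m • RS.simpleRoot i := by
          simp only [sub_smul, Finset.sum_sub_distrib, ite_smul, zero_smul]
          rw [Finset.sum_ite_eq' Finset.univ i (fun x => m • RS.simpleRoot x)]
          simp
        rw [hsum, ← hc, sRefl_apply', ← hαi, ← hm]
      have heq : (fun j => (d j : ℝ)) = fun j => (c j : ℝ) - if j = i then m else 0 := by
        refine coeff_unique (RS := RS) ?_
        rw [← hd, hrefl]
      have hdlt : (∑ j, d j) < k := by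
        have h1 : ((∑ j, d j : ℕ) : ℝ) < ((k : ℕ) : ℝ) := by
          push_cast
          calc ∑ j, (d j : ℝ) = ∑ j, ((c j : ℝ) - if j = i then m else 0) := by
                refine Finset.sum_congr rfl fun j _ => congrFun heq j
            _ = (∑ j, (c j : ℝ)) - m := by
                rw [Finset.sum_sub_distrib, Finset.sum_ite_eq' Finset.univ i (fun _ => m)]
                simp
            _ < ∑ j, (c j : ℝ) := by linarith
            _ = (k : ℝ) := by rw [← hk]; push_cast; ring
        exact_mod_cast h1
      obtain ⟨l, hl⟩ := ih _ hdlt (sRefl αi β) d hγΔ hd rfl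
      refine ⟨i :: (l ++ [i]), ?_⟩
      have hconj : sRefl αi * sRefl β * (sRefl αi)⁻¹ = sRefl (sRefl αi β) :=
        sRefl_conj (sRefl_isOrth αi) β
      have hconj' : sRefl αi * sRefl β * sRefl αi = sRefl (sRefl αi β) := by
        rw [← hconj, sRefl_inv']
      have hmain : sRefl β = sRefl αi * sRefl (sRefl αi β) * sRefl αi := by
        rw [← hconj']
        rw [show sRefl αi * (sRefl αi * sRefl β * sRefl αi) * sRefl αi
            = (sRefl αi * sRefl αi) * sRefl β * (sRefl αi * sRefl αi) by
          simp only [mul_assoc]]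
        rw [sRefl_mul_self', one_mul, mul_one]
      have h1 : prodW RS [i] = sRefl αi := by simp [prodW, hαi]
      rw [hmain, hl, prodW_cons, prodW_append, h1, mul_assoc]

lemma prodW_inv (l : List (Fin p)) : (prodW RS l)⁻¹ = prodW RS l.reverse := by
  induction l with
  | nil => simp [prodW]
  | cons i l ih =>
    rw [prodW_cons, mul_inv_rev, ih, sRefl_inv', List.reverse_cons, prodW_append]
    simp [prodW]

lemma mem_weyl_word {v : V ≃ₗ[ℝ] V} (hv : v ∈ RS.weylGroup) :
    ∃ l : List (Fin p), v = prodW RS l := by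
  induction hv using Subgroup.closure_induction with
  | mem w hw =>
    obtain ⟨α, hα, rfl⟩ := hw
    rcases RS.pos_or_neg α hα with h | h
    · obtain ⟨_, c, hc⟩ := mem_pos h
      exact sRefl_pos_word (∑ i, c i) α c hα hc rfl
    · obtain ⟨hΔ', c, hc⟩ := mem_pos h
      obtain ⟨l, hl⟩ := sRefl_pos_word (∑ i, c i) (-α) c hΔ' hc rfl
      exact ⟨l, by rw [← sRefl_neg' α, hl]⟩
  | one => exact ⟨[], rfl⟩
  | mul x y _ _ hx hy =>
    obtain ⟨a, ha⟩ := hx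
    obtain ⟨b, hb⟩ := hy
    exact ⟨a ++ b, by rw [ha, hb, prodW_append]⟩
  | inv x _ hx =>
    obtain ⟨a, ha⟩ := hx
    exact ⟨a.reverse, by rw [ha, prodW_inv]⟩

lemma lemA : ∀ (l : List (Fin p)) (j : Fin p), -(prodW RS l (RS.simpleRoot j)) ∈ RS.pos →
    ∃ (a : List (Fin p)) (t : Fin p) (b : List (Fin p)),
      l = a ++ t :: b ∧ prodW RS b (RS.simpleRoot j) = RS.simpleRoot t := by
  intro l
  induction l with
  | nil =>
    intro j hj
    rw [prodW_nil] at hj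
    exact absurd hj (fun h => pos_disjoint (simple_mem_pos j) h)
  | cons i rest ih =>
    intro j hj
    by_cases hneg : -(prodW RS rest (RS.simpleRoot j)) ∈ RS.pos
    · obtain ⟨a, t, b, hab, hb⟩ := ih j hneg
      exact ⟨i :: a, t, b, by rw [hab]; simp, hb⟩
    · have hΔ : prodW RS rest (RS.simpleRoot j) ∈ RS.Δ :=
        weyl_root (prodW_mem rest) (RS.simpleRoot_mem j)
      have hpos : prodW RS rest (RS.simpleRoot j) ∈ RS.pos :=
        (RS.pos_or_neg _ hΔ).resolve_right hneg
      have hkey : prodW RS rest (RS.simpleRoot j) = RS.simpleRoot i := by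
        by_contra hne
        have h1 : sRefl (RS.simpleRoot i) (prodW RS rest (RS.simpleRoot j)) ∈ RS.pos :=
          refl_simple_pos i hpos hne
        have h2 : prodW RS (i :: rest) (RS.simpleRoot j)
            = sRefl (RS.simpleRoot i) (prodW RS rest (RS.simpleRoot j)) := by
          rw [prodW_cons]; rfl
        rw [h2] at hj
        exact pos_disjoint h1 hj
      exact ⟨[], i, rest, rfl, hkey⟩

lemma key_triv : ∀ (k : ℕ) (l : List (Fin p)), l.length = k →
    (∀ i, prodW RS l (RS.simpleRoot i) ∈ RS.pos) → prodW RS l = 1 := by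
  intro k
  induction k using Nat.strong_induction_on with
  | _ k ih =>
    intro l hlen hpos
    rcases List.eq_nil_or_concat l with rfl | ⟨l₁, j, rfl⟩
    · rfl
    · rw [List.concat_eq_append] at hlen hpos ⊢
      have hform : prodW RS (l₁ ++ [j]) = prodW RS l₁ * sRefl (RS.simpleRoot j) := by
        rw [prodW_append]
        simp [prodW]
      have hx : prodW RS (l₁ ++ [j]) (RS.simpleRoot j)
          = -(prodW RS l₁ (RS.simpleRoot j)) := by
        rw [hform]
        show prodW RS l₁ (sRefl (RS.simpleRoot j) (RS.simpleRoot j)) = _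
        rw [sRefl_self' (root_ne_zero (RS.simpleRoot_mem j)), map_neg]
      have hneg : -(prodW RS l₁ (RS.simpleRoot j)) ∈ RS.pos := by
        rw [← hx]; exact hpos j
      obtain ⟨a, t, b, hab, hb⟩ := lemA l₁ j hneg
      -- conjugation: sRefl (sr t) = prodW b * sRefl (sr j) * (prodW b)⁻¹
      have hconj : prodW RS b * sRefl (RS.simpleRoot j) * (prodW RS b)⁻¹
          = sRefl (RS.simpleRoot t) := by
        rw [sRefl_conj (prodW_orth b) (RS.simpleRoot j), hb]
      have hred : prodW RS (l₁ ++ [j]) = prodW RS (a ++ b) := by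
        rw [hform, hab, prodW_append, prodW_append, prodW_cons]
        have hsb : sRefl (RS.simpleRoot t) * prodW RS b
            = prodW RS b * sRefl (RS.simpleRoot j) := by
          rw [← hconj, mul_assoc, inv_mul_cancel, mul_one]
        rw [show prodW RS a * (sRefl (RS.simpleRoot t) * prodW RS b) * sRefl (RS.simpleRoot j)
            = prodW RS a * ((sRefl (RS.simpleRoot t) * prodW RS b) * sRefl (RS.simpleRoot j))
            by simp only [mul_assoc]]
        rw [hsb, mul_assoc, sRefl_mul_self', mul_one]
      have hlen2 : (a ++ b).length < k := by
        have h2 : l₁.length = a.length + b.length + 1 := by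
          rw [hab]; simp only [List.length_append, List.length_cons]; omega
        have h1 : l₁.length + 1 = k := by simpa using hlen
        simp only [List.length_append]
        omega
      have := ih _ hlen2 (a ++ b) rfl (fun i => by rw [← hred]; exact hpos i)
      rw [hred, this]

lemma weyl_eq_one {v : V ≃ₗ[ℝ] V} (hv : v ∈ RS.weylGroup)
    (h : ∀ i, v (RS.simpleRoot i) ∈ RS.pos) : v = 1 := by
  obtain ⟨l, rfl⟩ := mem_weyl_word hv
  exact key_triv l.length l rfl h

/-- the "negative side" set attached to `x`. -/
def Nx (RS : RootSystemData V p) (x : V) : Set V :=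
  {β | β ∈ RS.Δ ∧ (⟪β, x⟫ < 0 ∨ (⟪β, x⟫ = 0 ∧ β ∈ RS.pos))}

lemma Nx_disj {x β : V} (h1 : β ∈ Nx RS x) (h2 : -β ∈ Nx RS x) : False := by
  obtain ⟨_, h1⟩ := h1
  obtain ⟨_, h2⟩ := h2
  rw [inner_neg_left] at h2
  rcases h1 with h1 | ⟨h1, hp1⟩ <;> rcases h2 with h2 | ⟨h2, hp2⟩
  · linarith
  · linarith
  · linarith
  · exact pos_disjoint hp1 hp2

lemma Nx_total {x β : V} (hβ : β ∈ RS.Δ) : β ∈ Nx RS x ∨ -β ∈ Nx RS x := by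
  have hβ' : -β ∈ RS.Δ := RS.neg_mem β hβ
  rcases lt_trichotomy (⟪β, x⟫ : ℝ) 0 with h | h | h
  · exact Or.inl ⟨hβ, Or.inl h⟩
  · rcases RS.pos_or_neg β hβ with hp | hp
    · exact Or.inl ⟨hβ, Or.inr ⟨h, hp⟩⟩
    · exact Or.inr ⟨hβ', Or.inr ⟨by rw [inner_neg_left, h, neg_zero], hp⟩⟩
  · exact Or.inr ⟨hβ', Or.inl (by rw [inner_neg_left]; linarith)⟩

/-- dominance in terms of `Nx` -/
lemma dom_iff {v : V ≃ₗ[ℝ] V} {r : V} :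
    RS.IsDominantPair v r ↔ v ∈ RS.weylGroup ∧ r ∈ RS.corootLattice ∧
      ∀ i, v (RS.simpleRoot i) ∈ Nx RS (v r) := by
  have key : ∀ i, (affAct v r (RS.simpleRoot i, 0) ∈ RS.affPos) ↔
      (v (RS.simpleRoot i) ∈ RS.Δ ∧ (⟪RS.simpleRoot i, r⟫ < 0 ∨
        (⟪RS.simpleRoot i, r⟫ = 0 ∧ v (RS.simpleRoot i) ∈ RS.pos))) := by
    intro i
    simp only [RootSystemData.affPos, affAct, Set.mem_setOf_eq, zero_sub]
    constructor
    · rintro ⟨h1, h2 | ⟨h2, h3⟩⟩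
      · exact ⟨h1, Or.inl (by linarith)⟩
      · exact ⟨h1, Or.inr ⟨by linarith, h3⟩⟩
    · rintro ⟨h1, h2 | ⟨h2, h3⟩⟩
      · exact ⟨h1, Or.inl (by linarith)⟩
      · exact ⟨h1, Or.inr ⟨by linarith, h3⟩⟩
  constructor
  · rintro ⟨hv, hr, hd⟩
    refine ⟨hv, hr, fun i => ?_⟩
    obtain ⟨hΔ, hcase⟩ := (key i).mp (hd i)
    have hip : ⟪RS.simpleRoot i, r⟫ = ⟪v (RS.simpleRoot i), v r⟫ := (weyl_orth hv _ _).symm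
    rw [hip] at hcase
    exact ⟨hΔ, hcase⟩
  · rintro ⟨hv, hr, hd⟩
    refine ⟨hv, hr, fun i => ?_⟩
    obtain ⟨hΔ, hcase⟩ := hd i
    have hip : ⟪RS.simpleRoot i, r⟫ = ⟪v (RS.simpleRoot i), v r⟫ := (weyl_orth hv _ _).symm
    rw [← hip] at hcase
    exact (key i).mpr ⟨hΔ, hcase⟩

lemma dom_pos_maps {v : V ≃ₗ[ℝ] V} {x : V} (hv : v ∈ RS.weylGroup)
    (h : ∀ i, v (RS.simpleRoot i) ∈ Nx RS x) {β : V} (hβ : β ∈ RS.pos) :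
    v β ∈ Nx RS x := by
  obtain ⟨hβΔ, c, hc⟩ := mem_pos hβ
  have hvΔ : v β ∈ RS.Δ := weyl_root hv hβΔ
  have hvsum : v β = ∑ i, (c i : ℝ) • v (RS.simpleRoot i) := by
    rw [hc, map_sum]
    simp
  have hterm : ∀ i, (c i : ℝ) * ⟪v (RS.simpleRoot i), x⟫ ≤ 0 := by
    intro i
    rcases (h i).2 with h' | ⟨h', _⟩
    · exact mul_nonpos_of_nonneg_of_nonpos (Nat.cast_nonneg _) (le_of_lt h')
    · rw [h']; simp
  have hinner : ⟪v β, x⟫ = ∑ i, (c i : ℝ) * ⟪v (RS.simpleRoot i), x⟫ := by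
    rw [hvsum, sum_inner]
    exact Finset.sum_congr rfl fun i _ => real_inner_smul_left _ _ _
  have hle : ⟪v β, x⟫ ≤ 0 := by
    rw [hinner]
    exact Finset.sum_nonpos fun i _ => hterm i
  rcases lt_or_eq_of_le hle with hlt | heq0
  · exact ⟨hvΔ, Or.inl hlt⟩
  · refine ⟨hvΔ, Or.inr ⟨heq0.symm ▸ rfl, ?_⟩⟩
    -- all terms vanish; each `v (simpleRoot i)` with `c i ≠ 0` is positive
    have hall : ∀ i ∈ Finset.univ, (c i : ℝ) * ⟪v (RS.simpleRoot i), x⟫ = 0 := by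
      rw [← Finset.sum_eq_zero_iff_of_nonpos (fun i _ => hterm i)]
      rw [← hinner, ← heq0]
    have hclaim : ∀ i, ∃ d : Fin p → ℕ,
        (c i : ℝ) • v (RS.simpleRoot i) = ∑ j, ((c i * d j : ℕ) : ℝ) • RS.simpleRoot j := by
      intro i
      by_cases hci : c i = 0
      · exact ⟨fun _ => 0, by simp [hci]⟩
      · have hz : ⟪v (RS.simpleRoot i), x⟫ = 0 := by
          have := hall i (Finset.mem_univ i)
          have hcne : (c i : ℝ) ≠ 0 := Nat.cast_ne_zero.mpr hci
          exact (mul_eq_zero.mp this).resolve_left hcne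
        have hpos' : v (RS.simpleRoot i) ∈ RS.pos := by
          rcases (h i).2 with h' | ⟨_, hp⟩
          · rw [hz] at h'; exact absurd h' (lt_irrefl 0)
          · exact hp
        obtain ⟨_, d, hd⟩ := mem_pos hpos'
        refine ⟨d, ?_⟩
        rw [hd, Finset.smul_sum]
        refine Finset.sum_congr rfl fun j _ => ?_
        rw [smul_smul]
        push_cast
        ring_nf
    choose d hd using hclaim
    refine mem_pos_of hvΔ (fun j => ∑ i, c i * d i j) ?_
    rw [hvsum]
    calc ∑ i, (c i : ℝ) • v (RS.simpleRoot i)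
        = ∑ i, ∑ j, ((c i * d i j : ℕ) : ℝ) • RS.simpleRoot j := by
          exact Finset.sum_congr rfl fun i _ => hd i
      _ = ∑ j, ((∑ i, c i * d i j : ℕ) : ℝ) • RS.simpleRoot j := by
          rw [Finset.sum_comm]
          refine Finset.sum_congr rfl fun j _ => ?_
          rw [← Finset.sum_smul]
          congr 1
          push_cast
          ring

lemma dom_unique {v v' : V ≃ₗ[ℝ] V} {x : V} (hv : v ∈ RS.weylGroup) (hv' : v' ∈ RS.weylGroup)
    (h : ∀ i, v (RS.simpleRoot i) ∈ Nx RS x) (h' : ∀ i, v' (RS.simpleRoot i) ∈ Nx RS x) :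
    v = v' := by
  have hu : v'⁻¹ * v ∈ RS.weylGroup := Subgroup.mul_mem _ (Subgroup.inv_mem _ hv') hv
  have hupos : ∀ i, (v'⁻¹ * v) (RS.simpleRoot i) ∈ RS.pos := by
    intro i
    have huΔ : (v'⁻¹ * v) (RS.simpleRoot i) ∈ RS.Δ := weyl_root hu (RS.simpleRoot_mem i)
    by_contra hnp
    have hneg : -((v'⁻¹ * v) (RS.simpleRoot i)) ∈ RS.pos := (RS.pos_or_neg _ huΔ).resolve_left hnp
    have h1 : v' (-((v'⁻¹ * v) (RS.simpleRoot i))) ∈ Nx RS x := dom_pos_maps hv' h' hneg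
    have h2 : v' ((v'⁻¹ * v) (RS.simpleRoot i)) = v (RS.simpleRoot i) :=
      v'.apply_symm_apply _
    rw [map_neg, h2] at h1
    exact Nx_disj (h i) h1
  have h1 : v'⁻¹ * v = 1 := weyl_eq_one hu hupos
  calc v = v' * (v'⁻¹ * v) := by rw [mul_inv_cancel_left]
    _ = v' * 1 := by rw [h1]
    _ = v' := mul_one v'

/-- the positive roots as a finset -/
noncomputable def posFin (RS : RootSystemData V p) : Finset V :=
  (Set.Finite.subset RS.finite pos_subset).toFinset

lemma mem_posFin {β : V} : β ∈ posFin RS ↔ β ∈ RS.pos := Set.Finite.mem_toFinset _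

open Classical in
/-- the number of positive roots β with v(β) outside `Nx x` -/
noncomputable def Ffun (RS : RootSystemData V p) (x : V) (v : V ≃ₗ[ℝ] V) : ℕ :=
  ((posFin RS).filter (fun β => v β ∉ Nx RS x)).card

open Classical in
lemma Ffun_lt {x : V} {v : V ≃ₗ[ℝ] V} (hv : v ∈ RS.weylGroup) {i : Fin p}
    (hi : v (RS.simpleRoot i) ∉ Nx RS x) :
    Ffun RS x (v * sRefl (RS.simpleRoot i)) < Ffun RS x v := by
  set αi := RS.simpleRoot i with hαi
  have hαpos : αi ∈ posFin RS := mem_posFin.mpr (simple_mem_pos i)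
  have hviΔ : v αi ∈ RS.Δ := weyl_root hv (RS.simpleRoot_mem i)
  have hvin : -(v αi) ∈ Nx RS x := (Nx_total hviΔ).resolve_left hi
  have hsplit : ∀ (P : V → Prop) (inst : DecidablePred P),
      (@Finset.filter V P inst (posFin RS)).card
      = (@Finset.filter V P inst ((posFin RS).erase αi)).card
        + (if P αi then 1 else 0) := by
    intro P inst
    by_cases hP : P αi
    · have hmem : αi ∈ (posFin RS).filter P := Finset.mem_filter.mpr ⟨hαpos, hP⟩
      have hcard : 0 < ((posFin RS).filter P).card := Finset.card_pos.mpr ⟨αi, hmem⟩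
      rw [if_pos hP, Finset.filter_erase, Finset.card_erase_of_mem hmem]
      omega
    · rw [if_neg hP, add_zero, Finset.filter_erase,
        Finset.erase_eq_of_notMem (fun h => hP (Finset.mem_filter.mp h).2)]
  -- bijection on the erased part
  have hmapsto : ∀ β ∈ (posFin RS).erase αi, sRefl αi β ∈ (posFin RS).erase αi := by
    intro β hβ
    obtain ⟨hne, hmem⟩ := Finset.mem_erase.mp hβ
    have hβpos : β ∈ RS.pos := mem_posFin.mp hmem
    have hγ : sRefl αi β ∈ RS.pos := refl_simple_pos i hβpos hne
    refine Finset.mem_erase.mpr ⟨?_, mem_posFin.mpr hγ⟩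
    intro hEq
    have hβval : β = -αi := by
      have h3 : sRefl αi (sRefl αi β) = sRefl αi αi := congrArg (sRefl αi) hEq
      rw [show sRefl αi (sRefl αi β) = β from reflFun_involutive αi β,
        sRefl_self' (root_ne_zero (RS.simpleRoot_mem i))] at h3
      exact h3
    rw [hβval] at hβpos
    exact pos_disjoint (simple_mem_pos i) hβpos
  have hbij : (((posFin RS).erase αi).filter (fun β => (v * sRefl αi) β ∉ Nx RS x)).card
      = (((posFin RS).erase αi).filter (fun β => v β ∉ Nx RS x)).card := by
    refine Finset.card_bij' (fun β _ => sRefl αi β) (fun β _ => sRefl αi β) ?_ ?_ ?_ ?_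
    · intro β hβ
      obtain ⟨hmem, hP⟩ := Finset.mem_filter.mp hβ
      exact Finset.mem_filter.mpr ⟨hmapsto β hmem, hP⟩
    · intro β hβ
      obtain ⟨hmem, hP⟩ := Finset.mem_filter.mp hβ
      refine Finset.mem_filter.mpr ⟨hmapsto β hmem, ?_⟩
      show v (sRefl αi (sRefl αi β)) ∉ Nx RS x
      rw [show sRefl αi (sRefl αi β) = β from reflFun_involutive αi β]
      exact hP
    · intro β _
      exact reflFun_involutive αi β
    · intro β _
      exact reflFun_involutive αi β
  have e1 : Ffun RS x (v * sRefl αi)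
      = (((posFin RS).erase αi).filter (fun β => (v * sRefl αi) β ∉ Nx RS x)).card
        + (if (v * sRefl αi) αi ∉ Nx RS x then 1 else 0) := by unfold Ffun; exact hsplit _ _
  have e2 : Ffun RS x v
      = (((posFin RS).erase αi).filter (fun β => v β ∉ Nx RS x)).card
        + (if v αi ∉ Nx RS x then 1 else 0) := by unfold Ffun; exact hsplit _ _
  have hneg : (v * sRefl αi) αi = -(v αi) := by
    show v (sRefl αi αi) = _
    rw [sRefl_self' (root_ne_zero (RS.simpleRoot_mem i)), map_neg]
  have hif1 : (if (v * sRefl αi) αi ∉ Nx RS x then 1 else 0) = 0 := by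
    rw [if_neg]
    rw [hneg]
    exact fun hcon => hcon hvin
  have hif2 : (if v αi ∉ Nx RS x then 1 else 0) = 1 := if_pos hi
  show Ffun RS x (v * sRefl αi) < Ffun RS x v
  rw [e1, e2, hbij, hif1, hif2]
  omega

lemma exists_dominant (x : V) :
    ∃ v : V ≃ₗ[ℝ] V, v ∈ RS.weylGroup ∧ ∀ i, v (RS.simpleRoot i) ∈ Nx RS x := by
  classical
  set S : Set ℕ := {n | ∃ v ∈ RS.weylGroup, Ffun RS x v = n} with hS
  have hSne : S.Nonempty := ⟨Ffun RS x 1, 1, Subgroup.one_mem _, rfl⟩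
  obtain ⟨v, hv, hvmin⟩ : ∃ v ∈ RS.weylGroup, Ffun RS x v = sInf S := Nat.sInf_mem hSne
  refine ⟨v, hv, fun i => ?_⟩
  by_contra hi
  have hlt := Ffun_lt hv hi
  have hmem : Ffun RS x (v * sRefl (RS.simpleRoot i)) ∈ S :=
    ⟨v * sRefl (RS.simpleRoot i), Subgroup.mul_mem _ hv (sRefl_simple_mem i), rfl⟩
  have := Nat.sInf_le hmem
  omega

lemma coroot_stable {v : V ≃ₗ[ℝ] V} (hv : v ∈ RS.weylGroup) {r : V}
    (hr : r ∈ RS.corootLattice) : v r ∈ RS.corootLattice := by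
  have hr' : r ∈ AddSubgroup.closure (corootVec '' RS.Δ) := hr
  show v r ∈ AddSubgroup.closure (corootVec '' RS.Δ)
  clear hr
  refine AddSubgroup.closure_induction ?_ ?_ ?_ ?_ hr'
  · rintro y ⟨α, hα, rfl⟩
    have hvc : v (corootVec α) = corootVec (v α) := by
      simp only [corootVec, map_smul]
      rw [weyl_orth hv α α]
    rw [hvc]
    exact AddSubgroup.subset_closure ⟨v α, weyl_root hv hα, rfl⟩
  · rw [map_zero]
    exact AddSubgroup.zero_mem _
  · intro a b _ _ ha hb
    rw [map_add]
    exact AddSubgroup.add_mem _ ha hb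
  · intro a _ ha
    rw [map_neg]
    exact AddSubgroup.neg_mem _ ha

lemma minimalPair_iff {v : V ≃ₗ[ℝ] V} {r : V} :
    RS.IsMinimalPair v r ↔ RS.IsDominantPair v r ∧
      (∀ i, -1 ≤ ⟪v r, RS.simpleRoot i⟫) ∧ ⟪v r, RS.θ⟫ ≤ 2 := by
  have hkey : ∀ (hv : v ∈ RS.weylGroup),
      (∀ i, (affActInv v r (RS.simpleRoot i, 0)).2 = ⟪v r, RS.simpleRoot i⟫) ∧
      (affActInv v r (-RS.θ, 1)).2 = 1 - ⟪v r, RS.θ⟫ := by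
    intro hv
    have horth := weyl_orth hv
    constructor
    · intro i
      show (0 : ℝ) + ⟪v.symm (RS.simpleRoot i), r⟫ = _
      rw [zero_add, ← horth (v.symm (RS.simpleRoot i)) r, v.apply_symm_apply, real_inner_comm]
    · show (1 : ℝ) + ⟪v.symm (-RS.θ), r⟫ = _
      rw [map_neg, inner_neg_left, ← horth (v.symm RS.θ) r, v.apply_symm_apply,
        real_inner_comm]
      ring
  constructor
  · rintro ⟨hd, h1, h2⟩
    obtain ⟨he1, he2⟩ := hkey hd.1
    refine ⟨hd, fun i => ?_, ?_⟩
    · have := h1 i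
      rwa [he1 i] at this
    · rw [he2] at h2
      linarith
  · rintro ⟨hd, h1, h2⟩
    obtain ⟨he1, he2⟩ := hkey hd.1
    refine ⟨hd, fun i => ?_, ?_⟩
    · rw [he1 i]
      exact h1 i
    · rw [he2]
      linarith

end Stmt1Aux

/-- Let `D_min = {x ∈ V : (x,α) ≥ −1 ∀ α ∈ Π and (x,θ) ≤ 2}`. Then:
(1) `w = v·t_r ∈ Ŵ` is minimal iff `w` is dominant and `v(r) ∈ D_min ∩ Q∨`;
(2) the map `Ŵ_min → D_min ∩ Q∨` sending `w = v·t_r` to `v(r)` is a bijection. -/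
theorem statement1 {V : Type*} [NormedAddCommGroup V] [InnerProductSpace ℝ V] {p : ℕ}
    (RS : RootSystemData V p) :
    (∀ (v : V ≃ₗ[ℝ] V) (r : V),
      RS.IsMinimalPair v r ↔ RS.IsDominantPair v r ∧
        v r ∈ {x : V | (∀ i, -1 ≤ ⟪x, RS.simpleRoot i⟫) ∧ ⟪x, RS.θ⟫ ≤ 2} ∩
          (RS.corootLattice : Set V)) ∧
    Set.BijOn (fun vr : (V ≃ₗ[ℝ] V) × V => vr.1 vr.2)
      {vr : (V ≃ₗ[ℝ] V) × V | RS.IsMinimalPair vr.1 vr.2}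
      ({x : V | (∀ i, -1 ≤ ⟪x, RS.simpleRoot i⟫) ∧ ⟪x, RS.θ⟫ ≤ 2} ∩
        (RS.corootLattice : Set V)) := by
  have part1 : ∀ (v : V ≃ₗ[ℝ] V) (r : V),
      RS.IsMinimalPair v r ↔ RS.IsDominantPair v r ∧
        v r ∈ {x : V | (∀ i, -1 ≤ ⟪x, RS.simpleRoot i⟫) ∧ ⟪x, RS.θ⟫ ≤ 2} ∩
          (RS.corootLattice : Set V) := by
    intro v r
    rw [minimalPair_iff]
    constructor
    · rintro ⟨hd, h1, h2⟩
      refine ⟨hd, ⟨h1, h2⟩, ?_⟩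
      exact coroot_stable hd.1 hd.2.1
    · rintro ⟨hd, ⟨h1, h2⟩, _⟩
      exact ⟨hd, h1, h2⟩
  refine ⟨part1, ?_, ?_, ?_⟩
  · -- MapsTo
    rintro ⟨v, r⟩ hvr
    obtain ⟨hd, hmem⟩ := (part1 v r).mp hvr
    exact hmem
  · -- InjOn
    rintro ⟨v, r⟩ hvr ⟨v', r'⟩ hvr' heq
    simp only [Set.mem_setOf_eq] at hvr hvr'
    have hd := hvr.1
    have hd' := hvr'.1
    obtain ⟨hv, hr, hNx⟩ := dom_iff.mp hd
    obtain ⟨hv', hr', hNx'⟩ := dom_iff.mp hd'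
    have hx : v r = v' r' := heq
    rw [hx] at hNx
    have hveq : v = v' := dom_unique hv hv' hNx hNx'
    have hreq : r = r' := by
      have := hx
      rw [hveq] at this
      exact v'.injective this
    rw [Prod.mk.injEq]
    exact ⟨hveq, hreq⟩
  · -- SurjOn
    rintro x ⟨hxD, hxQ⟩
    obtain ⟨v, hv, hNx⟩ := exists_dominant (RS := RS) x
    have hrQ : v.symm x ∈ RS.corootLattice := by
      have : v⁻¹ ∈ RS.weylGroup := Subgroup.inv_mem _ hv
      exact coroot_stable this hxQ
    have hvr : v (v.symm x) = x := v.apply_symm_apply x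
    have hdom : RS.IsDominantPair v (v.symm x) := by
      rw [dom_iff]
      refine ⟨hv, hrQ, ?_⟩
      rw [hvr]
      exact hNx
    have hmin : RS.IsMinimalPair v (v.symm x) := by
      rw [minimalPair_iff, hvr]
      exact ⟨hdom, hxD.1, hxD.2⟩
    exact ⟨(v, v.symm x), hmin, hvr⟩
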